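/- Let Ω be a nonempty set and let P be a coherent full conditional prevision on Ω. Then every element of posi(L_P) pointwise dominates some element of L_P: for every g ∈ posi(L_P) there exist a nonempty B ⊆ Ω, a gamble h and a real ε > 0 such that g(ω) ≥ 1_B(ω)·(h(ω) − P(h|B) + ε) for all ω ∈ Ω. Consequently, posi(L_P) + 𝒢≥0 = L_P + 𝒢≥0. -/

import Mathlib

open Pointwise

/-- The set of gambles on `Ω`: the bounded real-valued functions. -/
def Gmb (Ω : Type*) : Set (Ω → ℝ) := {f | ∃ M : ℝ, ∀ ω, |f ω| ≤ M}

/-- The nonnegative gambles. -/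
def Gge0 (Ω : Type*) : Set (Ω → ℝ) := {f | f ∈ Gmb Ω ∧ ∀ ω, 0 ≤ f ω}

/-- `posi S`: all strictly positive finite linear combinations of elements of `S`. -/
def posi {V : Type*} [AddCommGroup V] [Module ℝ V] (S : Set V) : Set V :=
  {u | ∃ n : ℕ, 0 < n ∧ ∃ (lam : Fin n → ℝ) (w : Fin n → V),
    (∀ k, 0 < lam k) ∧ (∀ k, w k ∈ S) ∧ u = ∑ k, lam k • w k}

/-- `L_P`: the called-off gambles `1_B·(f − P(f|B) + ε)`. -/
def LP {Ω : Type*} (P : (Ω → ℝ) → Set Ω → ℝ) : Set (Ω → ℝ) :=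
  {g | ∃ f ∈ Gmb Ω, ∃ B : Set Ω, B.Nonempty ∧ ∃ ε : ℝ, 0 < ε ∧
    g = B.indicator fun ω => f ω - P f B + ε}


lemma gmb_add {Ω : Type*} {f g : Ω → ℝ} (hf : f ∈ Gmb Ω) (hg : g ∈ Gmb Ω) :
    f + g ∈ Gmb Ω := by
  obtain ⟨M, hM⟩ := hf; obtain ⟨N, hN⟩ := hg
  exact ⟨M + N, fun ω => (abs_add_le _ _).trans (add_le_add (hM ω) (hN ω))⟩

lemma gmb_smul {Ω : Type*} (c : ℝ) {f : Ω → ℝ} (hf : f ∈ Gmb Ω) : c • f ∈ Gmb Ω := by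
  obtain ⟨M, hM⟩ := hf
  exact ⟨|c| * M, fun ω => by
    simpa [abs_mul] using mul_le_mul_of_nonneg_left (hM ω) (abs_nonneg c)⟩

lemma gmb_zero {Ω : Type*} : (0 : Ω → ℝ) ∈ Gmb Ω := ⟨0, by simp⟩

lemma gmb_const {Ω : Type*} (c : ℝ) : (fun _ : Ω => c) ∈ Gmb Ω := ⟨|c|, fun _ => le_rfl⟩

lemma gmb_sum {Ω ι : Type*} (s : Finset ι) (f : ι → Ω → ℝ)
    (h : ∀ i ∈ s, f i ∈ Gmb Ω) : (∑ i ∈ s, f i) ∈ Gmb Ω := by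
  induction s using Finset.cons_induction with
  | empty => simpa using gmb_zero
  | cons a s ha ih =>
      rw [Finset.sum_cons]
      exact gmb_add (h a (Finset.mem_cons_self a s))
        (ih fun i hi => h i (Finset.mem_cons_of_mem hi))

lemma gmb_indicator {Ω : Type*} (B : Set Ω) {f : Ω → ℝ} (hf : f ∈ Gmb Ω) :
    B.indicator f ∈ Gmb Ω := by
  obtain ⟨M, hM⟩ := hf
  refine ⟨|M|, fun ω => ?_⟩
  by_cases h : ω ∈ B
  · simp [Set.indicator_of_mem h]; exact (hM ω).trans (le_abs_self M)
  · simp [Set.indicator_of_notMem h]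

lemma lp_gmb {Ω : Type*} {P : (Ω → ℝ) → Set Ω → ℝ} {g : Ω → ℝ} (hg : g ∈ LP P) :
    g ∈ Gmb Ω := by
  obtain ⟨f, hf, B, hB, ε, hε, rfl⟩ := hg
  refine gmb_indicator B ?_
  have : (fun ω => f ω - P f B + ε) = f + (fun _ : Ω => -P f B + ε) := by
    funext ω; simp; ring
  rw [this]
  exact gmb_add hf (gmb_const _)

lemma PZero {Ω : Type*} (P : (Ω → ℝ) → Set Ω → ℝ)
    (hCC1 : ∀ f ∈ Gmb Ω, ∀ B : Set Ω, B.Nonempty →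
      sInf (f '' B) ≤ P f B ∧ P f B ≤ sSup (f '' B))
    {B : Set Ω} (hB : B.Nonempty) : P 0 B = 0 := by
  have h := hCC1 0 gmb_zero B hB
  have himg : (0 : Ω → ℝ) '' B = {0} := by
    have := hB.image_const (0 : ℝ)
    simpa [Pi.zero_def] using this
  rw [himg] at h
  simp at h
  linarith [h.1, h.2]

lemma Psum {Ω : Type*} (P : (Ω → ℝ) → Set Ω → ℝ)
    (hCC1 : ∀ f ∈ Gmb Ω, ∀ B : Set Ω, B.Nonempty →
      sInf (f '' B) ≤ P f B ∧ P f B ≤ sSup (f '' B))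
    (hCC2 : ∀ f ∈ Gmb Ω, ∀ g ∈ Gmb Ω, ∀ B : Set Ω, B.Nonempty → ∀ lam mu : ℝ,
      P (lam • f + mu • g) B = lam * P f B + mu * P g B)
    {B : Set Ω} (hB : B.Nonempty) {ι : Type*} (s : Finset ι)
    (lam : ι → ℝ) (w : ι → Ω → ℝ) (hw : ∀ i ∈ s, w i ∈ Gmb Ω) :
    P (∑ i ∈ s, lam i • w i) B = ∑ i ∈ s, lam i * P (w i) B := by
  induction s using Finset.cons_induction with
  | empty => simpa using PZero P hCC1 hB
  | cons a s ha ih =>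
      rw [Finset.sum_cons, Finset.sum_cons]
      have hrest : (∑ i ∈ s, lam i • w i) ∈ Gmb Ω :=
        gmb_sum s _ (fun i hi => gmb_smul _ (hw i (Finset.mem_cons_of_mem hi)))
      have h2 := hCC2 (w a) (hw a (Finset.mem_cons_self a s)) _ hrest B hB (lam a) 1
      rw [one_smul] at h2
      rw [h2, ih (fun i hi => hw i (Finset.mem_cons_of_mem hi))]
      ring

theorem stmt16 {Ω : Type*} [Nonempty Ω] (P : (Ω → ℝ) → Set Ω → ℝ)
    (hCC1 : ∀ f ∈ Gmb Ω, ∀ B : Set Ω, B.Nonempty →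
      sInf (f '' B) ≤ P f B ∧ P f B ≤ sSup (f '' B))
    (hCC2 : ∀ f ∈ Gmb Ω, ∀ g ∈ Gmb Ω, ∀ B : Set Ω, B.Nonempty → ∀ lam mu : ℝ,
      P (lam • f + mu • g) B = lam * P f B + mu * P g B)
    (hCC3 : ∀ f ∈ Gmb Ω, ∀ B C : Set Ω, (B ∩ C).Nonempty →
      P (C.indicator f) B = P f (B ∩ C) * P (C.indicator fun _ => (1 : ℝ)) B) :
    (∀ g ∈ posi (LP P), ∃ B : Set Ω, B.Nonempty ∧ ∃ h ∈ Gmb Ω, ∃ ε : ℝ, 0 < ε ∧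
      ∀ ω, B.indicator (fun ω' => h ω' - P h B + ε) ω ≤ g ω) ∧
    posi (LP P) + Gge0 Ω = LP P + Gge0 Ω := by
  have main : ∀ g ∈ posi (LP P), ∃ B : Set Ω, B.Nonempty ∧ ∃ h ∈ Gmb Ω, ∃ ε : ℝ, 0 < ε ∧
      ∀ ω, B.indicator (fun ω' => h ω' - P h B + ε) ω ≤ g ω := by
    rintro g ⟨n, hn, lam, w, hlam, hw, rfl⟩
    choose f hf Bk hBk εk hεk hwk using hw
    set B : Set Ω := ⋃ k, Bk k with hBdef
    have hsub : ∀ k, Bk k ⊆ B := fun k => Set.subset_iUnion Bk k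
    have k0 : Fin n := ⟨0, hn⟩
    have hB : B.Nonempty := by
      obtain ⟨x, hx⟩ := hBk k0
      exact ⟨x, hsub k0 hx⟩
    -- indicator gambles
    set I : Fin n → Ω → ℝ := fun k => (Bk k).indicator (fun _ => (1 : ℝ)) with hIdef
    have hIg : ∀ k, I k ∈ Gmb Ω := fun k => gmb_indicator _ (gmb_const 1)
    set p : Fin n → ℝ := fun k => P (I k) B with hpdef
    -- p k ≥ 0
    have hp0 : ∀ k, 0 ≤ p k := by
      intro k
      have h1 := (hCC1 (I k) (hIg k) B hB).1
      refine le_trans ?_ h1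
      apply le_csInf (hB.image _)
      rintro x ⟨ω, -, rfl⟩
      exact Set.indicator_nonneg (fun _ _ => zero_le_one) ω
    -- each w k is a gamble
    have hwg : ∀ k, w k ∈ Gmb Ω := by
      intro k
      exact lp_gmb ⟨f k, hf k, Bk k, hBk k, εk k, hεk k, hwk k⟩
    -- P (w k) B = εk k * p k
    have hPwk : ∀ k, P (w k) B = εk k * p k := by
      intro k
      have hinter : B ∩ Bk k = Bk k := Set.inter_eq_right.2 (hsub k)
      have hdecomp : w k = (1 : ℝ) • (Bk k).indicator (f k) +
          (εk k - P (f k) (Bk k)) • I k := by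
        rw [hwk k]
        funext ω
        by_cases h : ω ∈ Bk k
        · simp [Set.indicator_of_mem h, hIdef]; ring
        · simp [Set.indicator_of_notMem h, hIdef]
      have h2 := hCC2 ((Bk k).indicator (f k)) (gmb_indicator _ (hf k)) (I k) (hIg k)
        B hB 1 (εk k - P (f k) (Bk k))
      have h3 := hCC3 (f k) (hf k) B (Bk k) (by rw [hinter]; exact hBk k)
      rw [hinter] at h3
      rw [hdecomp, h2, h3]
      simp only [hpdef, hIdef]
      ring
    -- sum of p ≥ 1
    have hpsum : (1 : ℝ) ≤ ∑ k, p k := by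
      have hPS : P (∑ k, (1 : ℝ) • I k) B = ∑ k, 1 * p k :=
        Psum P hCC1 hCC2 hB Finset.univ _ I (fun i _ => hIg i)
      have h1 := (hCC1 (∑ k, (1 : ℝ) • I k)
        (gmb_sum _ _ (fun i _ => gmb_smul _ (hIg i))) B hB).1
      have hlow : (1 : ℝ) ≤ sInf ((∑ k, (1 : ℝ) • I k) '' B) := by
        apply le_csInf (hB.image _)
        rintro x ⟨ω, hω, rfl⟩
        obtain ⟨j, hj⟩ := Set.mem_iUnion.1 hω
        have hval : (∑ k, (1 : ℝ) • I k) ω = ∑ k, I k ω := by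
          simp [Finset.sum_apply]
        rw [hval]
        have : I j ω = 1 := Set.indicator_of_mem hj _
        calc (1 : ℝ) = I j ω := this.symm
          _ ≤ ∑ k, I k ω := Finset.single_le_sum
              (fun i _ => Set.indicator_nonneg (fun _ _ => zero_le_one) ω)
              (Finset.mem_univ j)
      have := le_trans hlow h1
      rw [hPS] at this
      simpa using this
    -- P g B > 0
    have hPg : P (∑ k, lam k • w k) B = ∑ k, lam k * (εk k * p k) := by
      rw [Psum P hCC1 hCC2 hB Finset.univ lam w (fun i _ => hwg i)]
      exact Finset.sum_congr rfl (fun k _ => by rw [hPwk k])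
    have hε : 0 < P (∑ k, lam k • w k) B := by
      rw [hPg]
      have hexj : ∃ j, 0 < p j := by
        by_contra hcon
        push_neg at hcon
        have : ∑ k, p k ≤ 0 := Finset.sum_nonpos (fun k _ => hcon k)
        linarith
      obtain ⟨j, hj⟩ := hexj
      refine Finset.sum_pos' (fun k _ => ?_) ⟨j, Finset.mem_univ j, ?_⟩
      · exact mul_nonneg (hlam k).le (mul_nonneg (hεk k).le (hp0 k))
      · exact mul_pos (hlam j) (mul_pos (hεk j) hj)
    -- g vanishes off B
    have hgzero : ∀ ω, ω ∉ B → (∑ k, lam k • w k) ω = 0 := by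
      intro ω hω
      have : ∀ k, w k ω = 0 := by
        intro k
        rw [hwk k]
        exact Set.indicator_of_notMem (fun h => hω (hsub k h)) _
      simp [Finset.sum_apply, this]
    refine ⟨B, hB, ∑ k, lam k • w k, gmb_sum _ _ (fun i _ => gmb_smul _ (hwg i)),
      P (∑ k, lam k • w k) B, hε, fun ω => ?_⟩
    by_cases h : ω ∈ B
    · rw [Set.indicator_of_mem h]; simp
    · rw [Set.indicator_of_notMem h, hgzero ω h]
  refine ⟨main, ?_⟩
  apply Set.Subset.antisymm
  · rintro x ⟨g, hg, q, hq, rfl⟩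
    obtain ⟨B, hB, h, hh, ε, hε, hle⟩ := main g hg
    set ℓ : Ω → ℝ := B.indicator (fun ω' => h ω' - P h B + ε) with hldef
    have hℓ : ℓ ∈ LP P := ⟨h, hh, B, hB, ε, hε, rfl⟩
    have hgG : g ∈ Gmb Ω := by
      obtain ⟨n, hn, lam, w, hlam, hw, rfl⟩ := hg
      exact gmb_sum _ _ (fun i _ => gmb_smul _ (lp_gmb (hw i)))
    refine ⟨ℓ, hℓ, g - ℓ + q, ⟨?_, ?_⟩, ?_⟩
    · exact gmb_add (by rw [sub_eq_add_neg]; exact gmb_add hgG (by simpa using gmb_smul (-1) (lp_gmb hℓ))) hq.1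
    · intro ω
      have := hle ω
      have hq0 := hq.2 ω
      simp only [Pi.add_apply, Pi.sub_apply]
      linarith
    · funext ω; simp; ring
  · rintro x ⟨g, hg, q, hq, rfl⟩
    refine ⟨g, ⟨1, one_pos, fun _ => 1, fun _ => g, fun _ => one_pos, fun _ => hg, ?_⟩, q, hq, rfl⟩
    simp
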